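/- Let Ã ∈ ℂ^{m×n} be of the 3×3 block form Ã = [[Σ̂₁, 0, R₁],[0, Σ̂₂, R₂],[S₁, S₂, A₃]] as described, and let (Σ₁, Ũ₁, Ṽ₁) be exact singular triplets: ÃṼ₁ = Ũ₁Σ₁ and Ã*Ũ₁ = Ṽ₁Σ₁, with Ũ₁, Ṽ₁ having orthonormal columns and Σ₁ real diagonal with positive diagonal entries, partitioned conformally as Ũ₁ = (Ũ₁₁; Ũ₂₁; Ũ₃₁), Ṽ₁ = (Ṽ₁₁; Ṽ₂₁; Ṽ₃₁). Assume gap := σ_min(Σ₁) − ‖Σ̂₂‖ > 0 and Gap := σ_min(Σ₁) − ‖A₃‖ > max(‖S₂‖, ‖R₂‖)²/gap. Then max(‖[Ũ₂₁; Ũ₃₁]‖, ‖[Ṽ₂₁; Ṽ₃₁]‖) ≤ (max(‖S₁‖, ‖R₁‖) / (Gap − max(‖S₂‖, ‖R₂‖)²/gap)) · (1 + max(‖R₂‖, ‖S₂‖)/gap). -/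

import Mathlib

open Matrix
open scoped Matrix.Norms.L2Operator

namespace SVDAux

variable {ι κ α β : Type*} [Fintype ι] [Fintype κ] [Fintype α] [Fintype β]
  [DecidableEq ι] [DecidableEq κ] [DecidableEq α] [DecidableEq β]

/-- selection matrix for a map `e : ι → κ` -/
def selM (e : ι → κ) : Matrix ι κ ℂ := Matrix.of fun i j => if e i = j then 1 else 0

lemma selM_mul (e : ι → κ) (M : Matrix κ α ℂ) : selM e * M = M.submatrix e id := by
  ext i c
  simp [selM, Matrix.mul_apply, ite_mul]

lemma selM_mul_conjTranspose_self {e : ι → κ} (he : Function.Injective e) :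
    selM e * (selM e)ᴴ = 1 := by
  ext i i'
  simp only [Matrix.mul_apply, Matrix.conjTranspose_apply, selM, Matrix.of_apply]
  by_cases h : i = i'
  · subst h
    simp [Finset.sum_ite_eq']
  · have : e i ≠ e i' := fun hh => h (he hh)
    rw [Finset.sum_eq_zero, Matrix.one_apply_ne h]
    intro j _
    by_cases h1 : e i = j
    · subst h1; simp [Ne.symm this]
    · simp [h1]

lemma norm_one_le : ‖(1 : Matrix ι ι ℂ)‖ ≤ 1 := by
  have h : ‖(1 : Matrix ι ι ℂ)ᴴ * 1‖ = ‖(1 : Matrix ι ι ℂ)‖ * ‖(1 : Matrix ι ι ℂ)‖ :=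
    Matrix.l2_opNorm_conjTranspose_mul_self _
  simp only [Matrix.conjTranspose_one, mul_one] at h
  nlinarith [norm_nonneg (1 : Matrix ι ι ℂ)]

lemma norm_selM_le {e : ι → κ} (he : Function.Injective e) : ‖selM e‖ ≤ 1 := by
  have h : ‖(selM e)ᴴᴴ * (selM e)ᴴ‖ = ‖(selM e)ᴴ‖ * ‖(selM e)ᴴ‖ :=
    Matrix.l2_opNorm_conjTranspose_mul_self _
  rw [Matrix.conjTranspose_conjTranspose, selM_mul_conjTranspose_self he] at h
  have h2 : ‖(selM e)ᴴ‖ = ‖selM e‖ := Matrix.l2_opNorm_conjTranspose _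
  rw [h2] at h
  nlinarith [norm_nonneg (selM e), norm_one_le (ι := ι)]

lemma norm_submatrix_le {e : ι → κ} (he : Function.Injective e) (M : Matrix κ α ℂ) :
    ‖M.submatrix e id‖ ≤ ‖M‖ := by
  rw [← selM_mul]
  calc ‖selM e * M‖ ≤ ‖selM e‖ * ‖M‖ := Matrix.l2_opNorm_mul _ _
  _ ≤ 1 * ‖M‖ := by gcongr; exact norm_selM_le he
  _ = ‖M‖ := one_mul _

lemma norm_col_submatrix_le {e : ι → κ} (he : Function.Injective e) (M : Matrix α κ ℂ) :
    ‖M.submatrix id e‖ ≤ ‖M‖ := by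
  have : M.submatrix id e = ((Mᴴ).submatrix e id)ᴴ := by ext i j; simp
  rw [this, Matrix.l2_opNorm_conjTranspose]
  calc ‖(Mᴴ).submatrix e id‖ ≤ ‖Mᴴ‖ := norm_submatrix_le he _
  _ = ‖M‖ := Matrix.l2_opNorm_conjTranspose _

lemma rows_decompose (M : Matrix (ι ⊕ κ) α ℂ) :
    M = (selM (Sum.inl : ι → ι ⊕ κ))ᴴ * M.submatrix Sum.inl id
      + (selM (Sum.inr : κ → ι ⊕ κ))ᴴ * M.submatrix Sum.inr id := by
  ext i c
  cases i with
  | inl i =>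
    simp [Matrix.mul_apply, Matrix.conjTranspose_apply, selM, apply_ite (starRingEnd ℂ),
      ite_mul, Finset.sum_ite_eq']
  | inr i =>
    simp [Matrix.mul_apply, Matrix.conjTranspose_apply, selM, apply_ite (starRingEnd ℂ),
      ite_mul, Finset.sum_ite_eq']

lemma norm_rows_le (M : Matrix (ι ⊕ κ) α ℂ) :
    ‖M‖ ≤ ‖M.submatrix Sum.inl id‖ + ‖M.submatrix Sum.inr id‖ := by
  nth_rewrite 1 [rows_decompose M]
  refine (norm_add_le _ _).trans ?_
  gcongr
  · calc ‖(selM (Sum.inl : ι → ι ⊕ κ))ᴴ * M.submatrix Sum.inl id‖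
        ≤ ‖(selM (Sum.inl : ι → ι ⊕ κ))ᴴ‖ * ‖M.submatrix Sum.inl id‖ := Matrix.l2_opNorm_mul _ _
    _ ≤ 1 * ‖M.submatrix Sum.inl id‖ := by
        gcongr
        rw [Matrix.l2_opNorm_conjTranspose]
        exact norm_selM_le Sum.inl_injective
    _ = _ := one_mul _
  · calc ‖(selM (Sum.inr : κ → ι ⊕ κ))ᴴ * M.submatrix Sum.inr id‖
        ≤ ‖(selM (Sum.inr : κ → ι ⊕ κ))ᴴ‖ * ‖M.submatrix Sum.inr id‖ := Matrix.l2_opNorm_mul _ _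
    _ ≤ 1 * ‖M.submatrix Sum.inr id‖ := by
        gcongr
        rw [Matrix.l2_opNorm_conjTranspose]
        exact norm_selM_le Sum.inr_injective
    _ = _ := one_mul _

lemma norm_diagonal_le (d : ι → ℂ) {c : ℝ} (hc : 0 ≤ c) (h : ∀ i, ‖d i‖ ≤ c) :
    ‖Matrix.diagonal d‖ ≤ c := by
  rw [Matrix.l2_opNorm_def]
  refine ContinuousLinearMap.opNorm_le_bound _ hc fun x => ?_
  have hx : ∀ i, ‖((Matrix.toEuclideanLin (Matrix.diagonal d)) x) i‖ ≤ c * ‖x i‖ := by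
    intro i
    have : ((Matrix.toEuclideanLin (Matrix.diagonal d)) x) i = d i * x i := by
      show (Matrix.diagonal d *ᵥ _) i = _
      rw [Matrix.mulVec_diagonal]
      rfl
    rw [this, norm_mul]
    exact mul_le_mul_of_nonneg_right (h i) (norm_nonneg _)
  rw [EuclideanSpace.norm_eq, EuclideanSpace.norm_eq]
  rw [show c * Real.sqrt (∑ i, ‖x i‖ ^ 2) = Real.sqrt (c^2 * ∑ i, ‖x i‖ ^ 2) by
    rw [Real.sqrt_mul (sq_nonneg c), Real.sqrt_sq hc]]
  apply Real.sqrt_le_sqrt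
  rw [Finset.mul_sum]
  refine Finset.sum_le_sum fun i _ => ?_
  have key : ‖((Matrix.toEuclideanLin.trans LinearMap.toContinuousLinearMap) (Matrix.diagonal d)) x i‖ ≤ c * ‖x i‖ := by
    have h3 : ((Matrix.toEuclideanLin.trans LinearMap.toContinuousLinearMap) (Matrix.diagonal d)) x i = d i * x i := by
      show (Matrix.diagonal d *ᵥ _) i = _
      rw [Matrix.mulVec_diagonal]
      rfl
    rw [h3, norm_mul]
    exact mul_le_mul_of_nonneg_right (h i) (norm_nonneg _)
  have h2 : (0:ℝ) ≤ ‖x i‖ := norm_nonneg _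
  nlinarith [norm_nonneg (((Matrix.toEuclideanLin.trans LinearMap.toContinuousLinearMap) (Matrix.diagonal d)) x i)]

lemma sigma_min_bound (X : Matrix α ι ℂ) (d : ι → ℝ) (σ : ℝ) (hσ : 0 < σ)
    (hd : ∀ i, σ ≤ d i) :
    σ * ‖X‖ ≤ ‖X * Matrix.diagonal (fun i => (d i : ℂ))‖ := by
  have hdne : ∀ i, (d i : ℂ) ≠ 0 := by
    intro i
    exact_mod_cast ne_of_gt (lt_of_lt_of_le hσ (hd i))
  have hinv : Matrix.diagonal (fun i => (d i : ℂ)) * Matrix.diagonal (fun i => ((d i)⁻¹ : ℂ)) = 1 := by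
    rw [Matrix.diagonal_mul_diagonal]
    rw [show (fun i => (d i : ℂ) * ((d i)⁻¹ : ℂ)) = fun _ => (1:ℂ) by
      funext i; exact mul_inv_cancel₀ (hdne i)]
    exact Matrix.diagonal_one
  have hX : X = (X * Matrix.diagonal (fun i => (d i : ℂ))) * Matrix.diagonal (fun i => ((d i)⁻¹ : ℂ)) := by
    rw [Matrix.mul_assoc, hinv, Matrix.mul_one]
  have hinvnorm : ‖Matrix.diagonal (fun i => ((d i)⁻¹ : ℂ))‖ ≤ σ⁻¹ := by
    apply norm_diagonal_le _ (by positivity)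
    intro i
    rw [norm_inv, Complex.norm_real, Real.norm_eq_abs,
      abs_of_pos (lt_of_lt_of_le hσ (hd i))]
    exact inv_anti₀ hσ (hd i)
  calc σ * ‖X‖ = σ * ‖(X * Matrix.diagonal (fun i => (d i : ℂ))) * Matrix.diagonal (fun i => ((d i)⁻¹ : ℂ))‖ := by rw [← hX]
  _ ≤ σ * (‖X * Matrix.diagonal (fun i => (d i : ℂ))‖ * ‖Matrix.diagonal (fun i => ((d i)⁻¹ : ℂ))‖) := by
      gcongr; exact Matrix.l2_opNorm_mul _ _
  _ ≤ σ * (‖X * Matrix.diagonal (fun i => (d i : ℂ))‖ * σ⁻¹) := by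
      gcongr
  _ = ‖X * Matrix.diagonal (fun i => (d i : ℂ))‖ * (σ * σ⁻¹) := by ring
  _ = _ := by rw [mul_inv_cancel₀ (ne_of_gt hσ), mul_one]

lemma mul_split (M : Matrix ι (α ⊕ β) ℂ) (N : Matrix (α ⊕ β) κ ℂ) :
    M * N = M.submatrix id Sum.inl * N.submatrix Sum.inl id
      + M.submatrix id Sum.inr * N.submatrix Sum.inr id := by
  ext i c
  simp [Matrix.mul_apply, Fintype.sum_sum_type]

lemma submatrix_rows_mul (M : Matrix κ α ℂ) (N : Matrix α β ℂ) (e : ι → κ) :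
    (M * N).submatrix e id = M.submatrix e id * N := by
  ext i c
  simp [Matrix.mul_apply]


section Blocks
variable {a₁ a₂ a₃ b₁ b₂ b₃ γ : Type*} [Fintype a₁] [Fintype a₂] [Fintype a₃]
  [Fintype b₁] [Fintype b₂] [Fintype b₃] [Fintype γ]

lemma blockRow_mid (D : Matrix a₁ b₁ ℂ) (X : Matrix a₁ b₂ ℂ) (Y : Matrix a₂ b₁ ℂ)
    (T : Matrix a₂ b₂ ℂ) (R : Matrix (a₁ ⊕ a₂) b₃ ℂ) (S : Matrix a₃ (b₁ ⊕ b₂) ℂ)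
    (A3 : Matrix a₃ b₃ ℂ) (W : Matrix ((b₁ ⊕ b₂) ⊕ b₃) γ ℂ) :
    ((Matrix.fromBlocks (Matrix.fromBlocks D X Y T) R S A3) * W).submatrix
        (fun i : a₂ => Sum.inl (Sum.inr i)) id
      = Y * W.submatrix (fun j : b₁ => Sum.inl (Sum.inl j)) id
        + T * W.submatrix (fun j : b₂ => Sum.inl (Sum.inr j)) id
        + R.submatrix Sum.inr id * W.submatrix Sum.inr id := by
  ext i c
  simp [Matrix.mul_apply, Fintype.sum_sum_type]

lemma blockRow_bot (B : Matrix (b₁ ⊕ b₂) (b₁ ⊕ b₂) ℂ)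
    (R : Matrix (b₁ ⊕ b₂) b₃ ℂ) (S : Matrix a₃ (b₁ ⊕ b₂) ℂ)
    (A3 : Matrix a₃ b₃ ℂ) (W : Matrix ((b₁ ⊕ b₂) ⊕ b₃) γ ℂ) :
    True := trivial

lemma blockRow_bot' (B : Matrix (a₁ ⊕ a₂) (b₁ ⊕ b₂) ℂ)
    (R : Matrix (a₁ ⊕ a₂) b₃ ℂ) (S : Matrix a₃ (b₁ ⊕ b₂) ℂ)
    (A3 : Matrix a₃ b₃ ℂ) (W : Matrix ((b₁ ⊕ b₂) ⊕ b₃) γ ℂ) :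
    ((Matrix.fromBlocks B R S A3) * W).submatrix (Sum.inr : a₃ → (a₁ ⊕ a₂) ⊕ a₃) id
      = S.submatrix id Sum.inl * W.submatrix (fun j : b₁ => Sum.inl (Sum.inl j)) id
        + S.submatrix id Sum.inr * W.submatrix (fun j : b₂ => Sum.inl (Sum.inr j)) id
        + A3 * W.submatrix Sum.inr id := by
  ext i c
  simp [Matrix.mul_apply, Fintype.sum_sum_type]

end Blocks

end SVDAux

set_option maxHeartbeats 1000000 in
open SVDAux in
/-- Theorem 6.1, bound (6.3) of the paper: if `Gap > max(‖S₂‖,‖R₂‖)²/gap`, then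
`max(‖[Ũ₂₁;Ũ₃₁]‖, ‖[Ṽ₂₁;Ṽ₃₁]‖)
  ≤ (max(‖S₁‖,‖R₁‖)/(Gap − max(‖S₂‖,‖R₂‖)²/gap))·(1 + max(‖R₂‖,‖S₂‖)/gap)`. -/
theorem svd_subspace_refined_bound
    {m n k₁ km kn : ℕ} (hmn : n ≤ m) (hk₁ : 1 ≤ k₁)
    (hk₁km : k₁ ≤ km) (hkmm : km ≤ m) (hk₁kn : k₁ ≤ kn) (hknn : kn ≤ n)
    (σ1hat : Fin k₁ → ℝ) (hσ1hat : ∀ i, 0 ≤ σ1hat i)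
    (Sig2hat : Matrix (Fin (km - k₁)) (Fin (kn - k₁)) ℂ)
    (hSig2off : ∀ (i : Fin (km - k₁)) (j : Fin (kn - k₁)), (i : ℕ) ≠ (j : ℕ) → Sig2hat i j = 0)
    (hSig2diag : ∀ (i : Fin (km - k₁)) (j : Fin (kn - k₁)), (i : ℕ) = (j : ℕ) →
      ∃ r : ℝ, 0 ≤ r ∧ Sig2hat i j = (r : ℂ))
    (R : Matrix (Fin k₁ ⊕ Fin (km - k₁)) (Fin (n - kn)) ℂ)
    (S : Matrix (Fin (m - km)) (Fin k₁ ⊕ Fin (kn - k₁)) ℂ)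
    (A3 : Matrix (Fin (m - km)) (Fin (n - kn)) ℂ)
    (U : Matrix ((Fin k₁ ⊕ Fin (km - k₁)) ⊕ Fin (m - km)) (Fin k₁) ℂ)
    (V : Matrix ((Fin k₁ ⊕ Fin (kn - k₁)) ⊕ Fin (n - kn)) (Fin k₁) ℂ)
    (hU : Uᴴ * U = 1) (hV : Vᴴ * V = 1)
    (σ1 : Fin k₁ → ℝ) (hσ1 : ∀ i, 0 < σ1 i)
    (hAV :
      (Matrix.fromBlocks
          (Matrix.fromBlocks (Matrix.diagonal fun i => Complex.ofReal (σ1hat i)) 0 0 Sig2hat)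
          R S A3) * V = U * Matrix.diagonal fun i => Complex.ofReal (σ1 i))
    (hAU :
      (Matrix.fromBlocks
          (Matrix.fromBlocks (Matrix.diagonal fun i => Complex.ofReal (σ1hat i)) 0 0 Sig2hat)
          R S A3)ᴴ * U = V * Matrix.diagonal fun i => Complex.ofReal (σ1 i))
    (Gap gap : ℝ)
    (hGapDef : Gap = (⨅ i, σ1 i) - ‖A3‖)
    (hgapDef : gap = (⨅ i, σ1 i) - ‖Sig2hat‖)
    (hgap : 0 < gap)
    (hGap : max ‖S.submatrix id Sum.inr‖ ‖R.submatrix Sum.inr id‖ ^ 2 / gap < Gap) :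
    max ‖U.submatrix (Sum.elim (fun i => Sum.inl (Sum.inr i)) Sum.inr) id‖
        ‖V.submatrix (Sum.elim (fun i => Sum.inl (Sum.inr i)) Sum.inr) id‖ ≤
      (max ‖S.submatrix id Sum.inl‖ ‖R.submatrix Sum.inl id‖ /
          (Gap - max ‖S.submatrix id Sum.inr‖ ‖R.submatrix Sum.inr id‖ ^ 2 / gap)) *
        (1 + max ‖R.submatrix Sum.inr id‖ ‖S.submatrix id Sum.inr‖ / gap) := by
  classical
  have hne : Nonempty (Fin k₁) := ⟨⟨0, hk₁⟩⟩
  set σ : ℝ := ⨅ i, σ1 i with hσdef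
  have hσle : ∀ i, σ ≤ σ1 i := fun i => ciInf_le (Set.Finite.bddBelow (Set.finite_range σ1)) i
  have hσpos : 0 < σ := by
    obtain ⟨i0, hi0⟩ := Finite.exists_min σ1
    exact lt_of_lt_of_le (hσ1 i0) (le_ciInf hi0)
  -- block equations
  have E2u : Sig2hat * V.submatrix (fun j : Fin (kn - k₁) => Sum.inl (Sum.inr j)) id
      + R.submatrix Sum.inr id * V.submatrix Sum.inr id
      = U.submatrix (fun i : Fin (km - k₁) => Sum.inl (Sum.inr i)) id
        * Matrix.diagonal (fun i => Complex.ofReal (σ1 i)) := by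
    have h : ((Matrix.fromBlocks
          (Matrix.fromBlocks (Matrix.diagonal fun i => Complex.ofReal (σ1hat i)) 0 0 Sig2hat)
          R S A3) * V).submatrix (fun i : Fin (km - k₁) => Sum.inl (Sum.inr i)) id
        = (U * Matrix.diagonal fun i => Complex.ofReal (σ1 i)).submatrix
            (fun i : Fin (km - k₁) => Sum.inl (Sum.inr i)) id := by rw [hAV]
    rw [blockRow_mid, submatrix_rows_mul] at h
    simpa using h
  have E3u : S.submatrix id Sum.inl * V.submatrix (fun j : Fin k₁ => Sum.inl (Sum.inl j)) id
      + S.submatrix id Sum.inr * V.submatrix (fun j : Fin (kn - k₁) => Sum.inl (Sum.inr j)) id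
      + A3 * V.submatrix Sum.inr id
      = U.submatrix Sum.inr id * Matrix.diagonal (fun i => Complex.ofReal (σ1 i)) := by
    have h : ((Matrix.fromBlocks
          (Matrix.fromBlocks (Matrix.diagonal fun i => Complex.ofReal (σ1hat i)) 0 0 Sig2hat)
          R S A3) * V).submatrix (Sum.inr : Fin (m - km) → _) id
        = (U * Matrix.diagonal fun i => Complex.ofReal (σ1 i)).submatrix
            (Sum.inr : Fin (m - km) → _) id := by rw [hAV]
    rw [blockRow_bot', submatrix_rows_mul] at h
    exact h
  have hAH : (Matrix.fromBlocks
        (Matrix.fromBlocks (Matrix.diagonal fun i => Complex.ofReal (σ1hat i)) 0 0 Sig2hat)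
        R S A3)ᴴ
      = Matrix.fromBlocks
          (Matrix.fromBlocks (Matrix.diagonal fun i => Complex.ofReal (σ1hat i))ᴴ 0 0 Sig2hatᴴ)
          Sᴴ Rᴴ A3ᴴ := by
    rw [Matrix.fromBlocks_conjTranspose, Matrix.fromBlocks_conjTranspose]
    simp
  have E2v : Sig2hatᴴ * U.submatrix (fun j : Fin (km - k₁) => Sum.inl (Sum.inr j)) id
      + (S.submatrix id Sum.inr)ᴴ * U.submatrix Sum.inr id
      = V.submatrix (fun i : Fin (kn - k₁) => Sum.inl (Sum.inr i)) id
        * Matrix.diagonal (fun i => Complex.ofReal (σ1 i)) := by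
    have h : ((Matrix.fromBlocks
          (Matrix.fromBlocks (Matrix.diagonal fun i => Complex.ofReal (σ1hat i)) 0 0 Sig2hat)
          R S A3)ᴴ * U).submatrix (fun i : Fin (kn - k₁) => Sum.inl (Sum.inr i)) id
        = (V * Matrix.diagonal fun i => Complex.ofReal (σ1 i)).submatrix
            (fun i : Fin (kn - k₁) => Sum.inl (Sum.inr i)) id := by rw [hAU]
    rw [hAH, blockRow_mid, submatrix_rows_mul] at h
    have hs : (Sᴴ).submatrix Sum.inr id = (S.submatrix id Sum.inr)ᴴ := by
      ext i j; simp
    rw [hs] at h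
    simpa using h
  have E3v : (R.submatrix Sum.inl id)ᴴ * U.submatrix (fun j : Fin k₁ => Sum.inl (Sum.inl j)) id
      + (R.submatrix Sum.inr id)ᴴ * U.submatrix (fun j : Fin (km - k₁) => Sum.inl (Sum.inr j)) id
      + A3ᴴ * U.submatrix Sum.inr id
      = V.submatrix Sum.inr id * Matrix.diagonal (fun i => Complex.ofReal (σ1 i)) := by
    have h : ((Matrix.fromBlocks
          (Matrix.fromBlocks (Matrix.diagonal fun i => Complex.ofReal (σ1hat i)) 0 0 Sig2hat)
          R S A3)ᴴ * U).submatrix (Sum.inr : Fin (n - kn) → _) id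
        = (V * Matrix.diagonal fun i => Complex.ofReal (σ1 i)).submatrix
            (Sum.inr : Fin (n - kn) → _) id := by rw [hAU]
    rw [hAH, blockRow_bot', submatrix_rows_mul] at h
    have hr1 : (Rᴴ).submatrix id Sum.inl = (R.submatrix Sum.inl id)ᴴ := by ext i j; simp
    have hr2 : (Rᴴ).submatrix id Sum.inr = (R.submatrix Sum.inr id)ᴴ := by ext i j; simp
    rw [hr1, hr2] at h
    exact h
  -- norms of U, V and their top blocks
  have hVnorm : ‖V‖ ≤ 1 := by
    have h := Matrix.l2_opNorm_conjTranspose_mul_self V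
    rw [hV] at h
    nlinarith [norm_nonneg V, SVDAux.norm_one_le (ι := Fin k₁)]
  have hUnorm : ‖U‖ ≤ 1 := by
    have h := Matrix.l2_opNorm_conjTranspose_mul_self U
    rw [hU] at h
    nlinarith [norm_nonneg U, SVDAux.norm_one_le (ι := Fin k₁)]
  have hV11 : ‖V.submatrix (fun j : Fin k₁ => Sum.inl (Sum.inl j)) id‖ ≤ 1 :=
    le_trans (norm_submatrix_le (fun a b h => by simpa using h) V) hVnorm
  have hU11 : ‖U.submatrix (fun j : Fin k₁ => Sum.inl (Sum.inl j)) id‖ ≤ 1 :=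
    le_trans (norm_submatrix_le (fun a b h => by simpa using h) U) hUnorm
  -- the four scalar inequalities
  have i2u : σ * ‖U.submatrix (fun i : Fin (km - k₁) => Sum.inl (Sum.inr i)) id‖
      ≤ ‖Sig2hat‖ * ‖V.submatrix (fun j : Fin (kn - k₁) => Sum.inl (Sum.inr j)) id‖
        + ‖R.submatrix Sum.inr id‖ * ‖V.submatrix Sum.inr id‖ := by
    calc σ * ‖U.submatrix (fun i : Fin (km - k₁) => Sum.inl (Sum.inr i)) id‖
        ≤ ‖U.submatrix (fun i : Fin (km - k₁) => Sum.inl (Sum.inr i)) id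
            * Matrix.diagonal (fun i => Complex.ofReal (σ1 i))‖ :=
          sigma_min_bound _ _ _ hσpos hσle
      _ = ‖Sig2hat * V.submatrix (fun j : Fin (kn - k₁) => Sum.inl (Sum.inr j)) id
            + R.submatrix Sum.inr id * V.submatrix Sum.inr id‖ := by rw [E2u]
      _ ≤ ‖Sig2hat * V.submatrix (fun j : Fin (kn - k₁) => Sum.inl (Sum.inr j)) id‖
            + ‖R.submatrix Sum.inr id * V.submatrix Sum.inr id‖ := norm_add_le _ _
      _ ≤ _ := add_le_add (Matrix.l2_opNorm_mul _ _) (Matrix.l2_opNorm_mul _ _)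
  have i2v : σ * ‖V.submatrix (fun i : Fin (kn - k₁) => Sum.inl (Sum.inr i)) id‖
      ≤ ‖Sig2hat‖ * ‖U.submatrix (fun j : Fin (km - k₁) => Sum.inl (Sum.inr j)) id‖
        + ‖S.submatrix id Sum.inr‖ * ‖U.submatrix Sum.inr id‖ := by
    calc σ * ‖V.submatrix (fun i : Fin (kn - k₁) => Sum.inl (Sum.inr i)) id‖
        ≤ ‖V.submatrix (fun i : Fin (kn - k₁) => Sum.inl (Sum.inr i)) id
            * Matrix.diagonal (fun i => Complex.ofReal (σ1 i))‖ :=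
          sigma_min_bound _ _ _ hσpos hσle
      _ = ‖Sig2hatᴴ * U.submatrix (fun j : Fin (km - k₁) => Sum.inl (Sum.inr j)) id
            + (S.submatrix id Sum.inr)ᴴ * U.submatrix Sum.inr id‖ := by rw [E2v]
      _ ≤ ‖Sig2hatᴴ * U.submatrix (fun j : Fin (km - k₁) => Sum.inl (Sum.inr j)) id‖
            + ‖(S.submatrix id Sum.inr)ᴴ * U.submatrix Sum.inr id‖ := norm_add_le _ _
      _ ≤ ‖Sig2hatᴴ‖ * ‖U.submatrix (fun j : Fin (km - k₁) => Sum.inl (Sum.inr j)) id‖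
            + ‖(S.submatrix id Sum.inr)ᴴ‖ * ‖U.submatrix Sum.inr id‖ :=
          add_le_add (Matrix.l2_opNorm_mul _ _) (Matrix.l2_opNorm_mul _ _)
      _ = _ := by rw [Matrix.l2_opNorm_conjTranspose, Matrix.l2_opNorm_conjTranspose]
  have i3u : σ * ‖U.submatrix Sum.inr id‖
      ≤ ‖S.submatrix id Sum.inl‖
        + ‖S.submatrix id Sum.inr‖ * ‖V.submatrix (fun j : Fin (kn - k₁) => Sum.inl (Sum.inr j)) id‖
        + ‖A3‖ * ‖V.submatrix Sum.inr id‖ := by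
    calc σ * ‖U.submatrix Sum.inr id‖
        ≤ ‖U.submatrix Sum.inr id * Matrix.diagonal (fun i => Complex.ofReal (σ1 i))‖ :=
          sigma_min_bound _ _ _ hσpos hσle
      _ = ‖S.submatrix id Sum.inl * V.submatrix (fun j : Fin k₁ => Sum.inl (Sum.inl j)) id
            + S.submatrix id Sum.inr * V.submatrix (fun j : Fin (kn - k₁) => Sum.inl (Sum.inr j)) id
            + A3 * V.submatrix Sum.inr id‖ := by rw [E3u]
      _ ≤ ‖S.submatrix id Sum.inl * V.submatrix (fun j : Fin k₁ => Sum.inl (Sum.inl j)) id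
            + S.submatrix id Sum.inr * V.submatrix (fun j : Fin (kn - k₁) => Sum.inl (Sum.inr j)) id‖
            + ‖A3 * V.submatrix Sum.inr id‖ := norm_add_le _ _
      _ ≤ ‖S.submatrix id Sum.inl * V.submatrix (fun j : Fin k₁ => Sum.inl (Sum.inl j)) id‖
            + ‖S.submatrix id Sum.inr * V.submatrix (fun j : Fin (kn - k₁) => Sum.inl (Sum.inr j)) id‖
            + ‖A3 * V.submatrix Sum.inr id‖ := add_le_add_left (norm_add_le _ _) _
      _ ≤ ‖S.submatrix id Sum.inl‖ * ‖V.submatrix (fun j : Fin k₁ => Sum.inl (Sum.inl j)) id‖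
            + ‖S.submatrix id Sum.inr‖ * ‖V.submatrix (fun j : Fin (kn - k₁) => Sum.inl (Sum.inr j)) id‖
            + ‖A3‖ * ‖V.submatrix Sum.inr id‖ :=
          add_le_add (add_le_add (Matrix.l2_opNorm_mul _ _) (Matrix.l2_opNorm_mul _ _))
            (Matrix.l2_opNorm_mul _ _)
      _ ≤ _ := by
          have := mul_le_mul_of_nonneg_left hV11 (norm_nonneg (S.submatrix id Sum.inl))
          linarith
  have i3v : σ * ‖V.submatrix Sum.inr id‖
      ≤ ‖R.submatrix Sum.inl id‖
        + ‖R.submatrix Sum.inr id‖ * ‖U.submatrix (fun j : Fin (km - k₁) => Sum.inl (Sum.inr j)) id‖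
        + ‖A3‖ * ‖U.submatrix Sum.inr id‖ := by
    calc σ * ‖V.submatrix Sum.inr id‖
        ≤ ‖V.submatrix Sum.inr id * Matrix.diagonal (fun i => Complex.ofReal (σ1 i))‖ :=
          sigma_min_bound _ _ _ hσpos hσle
      _ = ‖(R.submatrix Sum.inl id)ᴴ * U.submatrix (fun j : Fin k₁ => Sum.inl (Sum.inl j)) id
            + (R.submatrix Sum.inr id)ᴴ * U.submatrix (fun j : Fin (km - k₁) => Sum.inl (Sum.inr j)) id
            + A3ᴴ * U.submatrix Sum.inr id‖ := by rw [E3v]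
      _ ≤ ‖(R.submatrix Sum.inl id)ᴴ * U.submatrix (fun j : Fin k₁ => Sum.inl (Sum.inl j)) id‖
            + ‖(R.submatrix Sum.inr id)ᴴ * U.submatrix (fun j : Fin (km - k₁) => Sum.inl (Sum.inr j)) id‖
            + ‖A3ᴴ * U.submatrix Sum.inr id‖ :=
          le_trans (norm_add_le _ _) (add_le_add_left (norm_add_le _ _) _)
      _ ≤ ‖(R.submatrix Sum.inl id)ᴴ‖ * ‖U.submatrix (fun j : Fin k₁ => Sum.inl (Sum.inl j)) id‖
            + ‖(R.submatrix Sum.inr id)ᴴ‖ * ‖U.submatrix (fun j : Fin (km - k₁) => Sum.inl (Sum.inr j)) id‖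
            + ‖A3ᴴ‖ * ‖U.submatrix Sum.inr id‖ :=
          add_le_add (add_le_add (Matrix.l2_opNorm_mul _ _) (Matrix.l2_opNorm_mul _ _))
            (Matrix.l2_opNorm_mul _ _)
      _ ≤ _ := by
          rw [Matrix.l2_opNorm_conjTranspose, Matrix.l2_opNorm_conjTranspose,
            Matrix.l2_opNorm_conjTranspose]
          have := mul_le_mul_of_nonneg_left hU11 (norm_nonneg (R.submatrix Sum.inl id))
          linarith
  -- the stacked blocks in the goal
  have hWu : ‖U.submatrix (Sum.elim (fun i => Sum.inl (Sum.inr i)) Sum.inr) id‖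
      ≤ ‖U.submatrix (fun i : Fin (km - k₁) => Sum.inl (Sum.inr i)) id‖
        + ‖U.submatrix Sum.inr id‖ := by
    have h := norm_rows_le (U.submatrix (Sum.elim (fun i => Sum.inl (Sum.inr i)) Sum.inr) id)
    simpa [Matrix.submatrix_submatrix, Function.comp] using h
  have hWv : ‖V.submatrix (Sum.elim (fun i => Sum.inl (Sum.inr i)) Sum.inr) id‖
      ≤ ‖V.submatrix (fun i : Fin (kn - k₁) => Sum.inl (Sum.inr i)) id‖
        + ‖V.submatrix Sum.inr id‖ := by
    have h := norm_rows_le (V.submatrix (Sum.elim (fun i => Sum.inl (Sum.inr i)) Sum.inr) id)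
    simpa [Matrix.submatrix_submatrix, Function.comp] using h
  -- pure real arithmetic from here on
  rw [max_comm ‖R.submatrix Sum.inr id‖ ‖S.submatrix id Sum.inr‖]
  set τ : ℝ := max ‖S.submatrix id Sum.inr‖ ‖R.submatrix Sum.inr id‖ with hτdef
  set sTop : ℝ := max ‖S.submatrix id Sum.inl‖ ‖R.submatrix Sum.inl id‖ with hsdef
  set u2 := ‖U.submatrix (fun i : Fin (km - k₁) => Sum.inl (Sum.inr i)) id‖ with hu2
  set v2 := ‖V.submatrix (fun i : Fin (kn - k₁) => Sum.inl (Sum.inr i)) id‖ with hv2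
  set u3 := ‖U.submatrix (Sum.inr : Fin (m - km) → _) id‖ with hu3
  set v3 := ‖V.submatrix (Sum.inr : Fin (n - kn) → _) id‖ with hv3
  have hτ0 : 0 ≤ τ := le_trans (norm_nonneg _) (le_max_left _ _)
  have hs0 : 0 ≤ sTop := le_trans (norm_nonneg _) (le_max_left _ _)
  have hu20 : 0 ≤ u2 := norm_nonneg _
  have hv20 : 0 ≤ v2 := norm_nonneg _
  have hu30 : 0 ≤ u3 := norm_nonneg _
  have hv30 : 0 ≤ v3 := norm_nonneg _
  have hb0 : 0 ≤ ‖Sig2hat‖ := norm_nonneg _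
  have ha0 : 0 ≤ ‖A3‖ := norm_nonneg _
  have hM2n : 0 ≤ max u2 v2 := le_trans hu20 (le_max_left _ _)
  have hM3n : 0 ≤ max u3 v3 := le_trans hu30 (le_max_left _ _)
  have key2 : gap * max u2 v2 ≤ τ * max u3 v3 := by
    have hA : σ * u2 ≤ ‖Sig2hat‖ * max u2 v2 + τ * max u3 v3 :=
      i2u.trans (add_le_add (mul_le_mul_of_nonneg_left (le_max_right _ _) hb0)
        (mul_le_mul (le_max_right _ _) (le_max_right _ _) hv30 hτ0))
    have hB : σ * v2 ≤ ‖Sig2hat‖ * max u2 v2 + τ * max u3 v3 :=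
      i2v.trans (add_le_add (mul_le_mul_of_nonneg_left (le_max_left _ _) hb0)
        (mul_le_mul (le_max_left _ _) (le_max_left _ _) hu30 hτ0))
    have hM : σ * max u2 v2 ≤ ‖Sig2hat‖ * max u2 v2 + τ * max u3 v3 := by
      rw [mul_max_of_nonneg _ _ hσpos.le]
      exact max_le hA hB
    rw [hgapDef, sub_mul]
    linarith
  have key3 : Gap * max u3 v3 ≤ sTop + τ * max u2 v2 := by
    have hA : σ * u3 ≤ sTop + τ * max u2 v2 + ‖A3‖ * max u3 v3 :=
      i3u.trans (add_le_add (add_le_add (le_max_left _ _)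
        (mul_le_mul (le_max_left _ _) (le_max_right _ _) hv20 hτ0))
        (mul_le_mul_of_nonneg_left (le_max_right _ _) ha0))
    have hB : σ * v3 ≤ sTop + τ * max u2 v2 + ‖A3‖ * max u3 v3 :=
      i3v.trans (add_le_add (add_le_add (le_max_right _ _)
        (mul_le_mul (le_max_right _ _) (le_max_left _ _) hu20 hτ0))
        (mul_le_mul_of_nonneg_left (le_max_left _ _) ha0))
    have hM : σ * max u3 v3 ≤ sTop + τ * max u2 v2 + ‖A3‖ * max u3 v3 := by
      rw [mul_max_of_nonneg _ _ hσpos.le]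
      exact max_le hA hB
    rw [hGapDef, sub_mul]
    linarith
  have hgne : gap ≠ 0 := ne_of_gt hgap
  have hD : 0 < Gap - τ ^ 2 / gap := by linarith
  have hM3 : max u3 v3 ≤ sTop / (Gap - τ ^ 2 / gap) := by
    rw [le_div_iff₀ hD]
    refine le_of_mul_le_mul_right ?_ hgap
    have expand : max u3 v3 * (Gap - τ ^ 2 / gap) * gap
        = gap * (Gap * max u3 v3) - τ * (τ * max u3 v3) := by
      field_simp
    rw [expand]
    have e1 : gap * (Gap * max u3 v3) ≤ gap * sTop + τ * (gap * max u2 v2) := by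
      calc gap * (Gap * max u3 v3) ≤ gap * (sTop + τ * max u2 v2) :=
            mul_le_mul_of_nonneg_left key3 hgap.le
        _ = gap * sTop + τ * (gap * max u2 v2) := by ring
    have e2 : τ * (gap * max u2 v2) ≤ τ * (τ * max u3 v3) :=
      mul_le_mul_of_nonneg_left key2 hτ0
    linarith
  have hM2 : max u2 v2 ≤ τ * max u3 v3 / gap := by
    rw [le_div_iff₀ hgap]
    linarith
  have h1τ : 0 ≤ 1 + τ / gap := by positivity
  calc max ‖U.submatrix (Sum.elim (fun i => Sum.inl (Sum.inr i)) Sum.inr) id‖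
        ‖V.submatrix (Sum.elim (fun i => Sum.inl (Sum.inr i)) Sum.inr) id‖
      ≤ max u2 v2 + max u3 v3 :=
        max_le (hWu.trans (add_le_add (le_max_left _ _) (le_max_left _ _)))
          (hWv.trans (add_le_add (le_max_right _ _) (le_max_right _ _)))
    _ ≤ τ * max u3 v3 / gap + max u3 v3 := by linarith
    _ = max u3 v3 * (1 + τ / gap) := by field_simp; ring
    _ ≤ (sTop / (Gap - τ ^ 2 / gap)) * (1 + τ / gap) :=
        mul_le_mul_of_nonneg_right hM3 h1τ
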